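/- The exploiter's worst-case best-response set BR(X*) equals {y ∈ Δ(m) : ∃ w ∈ ℝ^m_{≥0}, e_iᵀBy + (z*·1ᵀ − e_iᵀA)w ≥ p_e for all i ∈ [n]}, where p_e = max_{y∈Δ(m)} min_{x∈X*} xᵀBy. -/

import Mathlib

open Matrix

noncomputable def pay {n m : ℕ} (A : Matrix (Fin n) (Fin m) ℝ)
    (x : Fin n → ℝ) (y : Fin m → ℝ) : ℝ := x ⬝ᵥ (A *ᵥ y)

noncomputable def payPure {n m : ℕ} (A : Matrix (Fin n) (Fin m) ℝ)
    (x : Fin n → ℝ) (j : Fin m) : ℝ := x ⬝ᵥ (A *ᵥ Pi.single j 1)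

/-- `z* = max_{x ∈ Δ(n)} min_{j ∈ [m]} (xᵀA)_j`. -/
noncomputable def zStar {n m : ℕ} (A : Matrix (Fin n) (Fin m) ℝ) : ℝ :=
  sSup ((fun x => sInf (Set.range (payPure A x))) '' stdSimplex ℝ (Fin n))

/-- The polytope `X* = {x ∈ Δ(n) : z* ≤ xᵀAe_j ∀ j}` of victim maximin strategies. -/
noncomputable def Xstar {n m : ℕ} (A : Matrix (Fin n) (Fin m) ℝ) : Set (Fin n → ℝ) :=
  {x | x ∈ stdSimplex ℝ (Fin n) ∧ ∀ j : Fin m, zStar A ≤ payPure A x j}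

/-- `p_e = max_{y ∈ Δ(m)} min_{x ∈ X*} xᵀBy`. -/
noncomputable def pE {n m : ℕ} (A B : Matrix (Fin n) (Fin m) ℝ) : ℝ :=
  sSup ((fun y => sInf ((fun x => pay B x y) '' Xstar A)) '' stdSimplex ℝ (Fin m))

/-- `BR(X*) = argmax_{y ∈ Δ(m)} min_{x ∈ X*} xᵀBy`. -/
noncomputable def BRSet {n m : ℕ} (A B : Matrix (Fin n) (Fin m) ℝ) : Set (Fin m → ℝ) :=
  {y | y ∈ stdSimplex ℝ (Fin m) ∧ ∀ y' ∈ stdSimplex ℝ (Fin m),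
    sInf ((fun x => pay B x y') '' Xstar A) ≤ sInf ((fun x => pay B x y) '' Xstar A)}

/-- Carathéodory step: any conic combination over `S` equals a conic combination over a
subset `T ⊆ S` on which `v` is linearly independent. -/
lemma cone_caratheodory {ι : Type*} [Fintype ι] [DecidableEq ι]
    {E : Type*} [AddCommGroup E] [Module ℝ E]
    (v : ι → E) (S : Finset ι) (a : ι → ℝ) (ha : ∀ t ∈ S, 0 ≤ a t) :
    ∃ T ⊆ S, LinearIndependent ℝ (fun t : T => v t) ∧
      ∃ b : ι → ℝ, (∀ t ∈ T, 0 ≤ b t) ∧ ∑ t ∈ T, b t • v t = ∑ t ∈ S, a t • v t := by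
  induction S using Finset.strongInduction generalizing a with
  | _ S ih =>
  by_cases hLI : LinearIndependent ℝ (fun t : S => v t)
  · exact ⟨S, le_refl _, hLI, a, ha, rfl⟩
  · obtain ⟨g, hg0, t1, hg1⟩ := Fintype.not_linearIndependent_iff.mp hLI
    -- turn g into a function on Fin k supported in S
    set g' : ι → ℝ := fun t => if h : t ∈ S then g ⟨t, h⟩ else 0 with hg'
    have hgsum : ∑ t ∈ S, g' t • v t = 0 := by
      rw [← hg0, ← Finset.sum_attach S (fun t => g' t • v t)]
      apply Finset.sum_congr rfl
      intro t _
      simp [hg', t.2]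
    have hgne : ∃ t ∈ S, g' t ≠ 0 := ⟨t1, t1.2, by simpa [hg', t1.2] using hg1⟩
    -- WLOG there is t ∈ S with g' t > 0
    have key : ∀ (g'' : ι → ℝ), (∑ t ∈ S, g'' t • v t = 0) → (∃ t ∈ S, 0 < g'' t) →
        ∃ T ⊆ S, LinearIndependent ℝ (fun t : T => v t) ∧
          ∃ b : ι → ℝ, (∀ t ∈ T, 0 ≤ b t) ∧ ∑ t ∈ T, b t • v t = ∑ t ∈ S, a t • v t := by
      intro g'' hsum ⟨tp, htpS, htp⟩
      -- minimize a t / g'' t over {t ∈ S | 0 < g'' t}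
      have hne : (S.filter (fun t => 0 < g'' t)).Nonempty := ⟨tp, by simp [htpS, htp]⟩
      obtain ⟨t0, ht0mem, ht0min⟩ := Finset.exists_min_image _ (fun t => a t / g'' t) hne
      simp only [Finset.mem_filter] at ht0mem
      set r : ℝ := a t0 / g'' t0 with hr
      have hr0 : 0 ≤ r := div_nonneg (ha t0 ht0mem.1) ht0mem.2.le
      set b : ι → ℝ := fun t => a t - r * g'' t with hb
      have hb0 : ∀ t ∈ S, 0 ≤ b t := by
        intro t ht
        rcases le_or_gt (g'' t) 0 with h | h
        · have : r * g'' t ≤ 0 := mul_nonpos_of_nonneg_of_nonpos hr0 h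
          simp only [hb]; linarith [ha t ht]
        · have h2 : r ≤ a t / g'' t := ht0min t (by simp [ht, h])
          have h3 : r * g'' t ≤ a t := (le_div_iff₀ h).mp h2
          simp only [hb]; linarith
      have hbt0 : b t0 = 0 := by
        have : g'' t0 ≠ 0 := ne_of_gt ht0mem.2
        simp only [hb, hr]
        field_simp
        ring
      have hbsum : ∑ t ∈ S, b t • v t = ∑ t ∈ S, a t • v t := by
        simp only [hb, sub_smul, Finset.sum_sub_distrib, mul_smul]
        rw [← Finset.smul_sum, hsum, smul_zero, sub_zero]
      have herase : ∑ t ∈ S.erase t0, b t • v t = ∑ t ∈ S, a t • v t := by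
        rw [← hbsum, Finset.sum_erase]
        rw [hbt0, zero_smul]
      obtain ⟨T, hTsub, hTLI, c, hc0, hcsum⟩ :=
        ih (S.erase t0) (Finset.erase_ssubset ht0mem.1) b (fun t ht => hb0 t (Finset.mem_of_mem_erase ht))
      exact ⟨T, hTsub.trans (Finset.erase_subset _ _), hTLI, c, hc0, hcsum.trans herase⟩
    rcases hgne with ⟨ts, htsS, hts⟩
    rcases lt_or_gt_of_ne hts with h | h
    · exact key (-g') (by simpa using hgsum) ⟨ts, htsS, by simpa using h⟩
    · exact key g' hgsum ⟨ts, htsS, h⟩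

/-- A finitely generated cone in Euclidean space is closed. -/
lemma isClosed_fgCone {ι : Type*} [Fintype ι] [DecidableEq ι] {n : ℕ}
    (v : ι → EuclideanSpace ℝ (Fin n)) :
    IsClosed {x : EuclideanSpace ℝ (Fin n) |
      ∃ a : ι → ℝ, (∀ t, 0 ≤ a t) ∧ x = ∑ t, a t • v t} := by
  have hrw : {x : EuclideanSpace ℝ (Fin n) | ∃ a : ι → ℝ, (∀ t, 0 ≤ a t) ∧ x = ∑ t, a t • v t}
      = ⋃ (S : Finset ι) (_ : LinearIndependent ℝ (fun t : S => v t)),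
        (fun a : ↥S → ℝ => ∑ t : S, a t • v t) '' {a | ∀ t, 0 ≤ a t} := by
    ext x
    simp only [Set.mem_setOf_eq, Set.mem_iUnion, Set.mem_image]
    constructor
    · rintro ⟨a, ha, rfl⟩
      obtain ⟨T, -, hLI, b, hb0, hsum⟩ := cone_caratheodory v Finset.univ a (fun t _ => ha t)
      refine ⟨T, hLI, fun t => b t, fun t => hb0 t t.2, ?_⟩
      rw [← hsum, ← Finset.sum_attach T (fun t => b t • v t)]
      rfl
    · rintro ⟨S, hLI, a, ha, rfl⟩
      refine ⟨fun t => if h : t ∈ S then a ⟨t, h⟩ else 0, fun t => ?_, ?_⟩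
      · by_cases h : t ∈ S
        · simpa [h] using ha ⟨t, h⟩
        · simp [h]
      · show ∑ x : {x // x ∈ S}, a x • v x
            = ∑ t, (if h : t ∈ S then a ⟨t, h⟩ else 0) • v t
        rw [show ∑ t, (if h : t ∈ S then a ⟨t, h⟩ else 0) • v t
            = ∑ t ∈ S, (if h : t ∈ S then a ⟨t, h⟩ else 0) • v t from
          (Finset.sum_subset (Finset.subset_univ S) (by intro t _ h; simp [h])).symm]
        rw [← Finset.sum_attach S
          (fun t => (if h : t ∈ S then a ⟨t, h⟩ else 0) • v t)]
        apply Finset.sum_congr rfl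
        intro t _
        simp [t.2]
  rw [hrw]
  apply isClosed_iUnion_of_finite
  intro S
  classical
  rw [Set.iUnion_eq_if]
  split_ifs with hLI
  · -- image of the closed nonneg orthant under an injective linear map
    set L : (↥S → ℝ) →ₗ[ℝ] EuclideanSpace ℝ (Fin n) :=
      { toFun := fun a => ∑ t : S, a t • v t
        map_add' := by
          intro a b
          simp [add_smul, Finset.sum_add_distrib]
        map_smul' := by
          intro c a
          simp [mul_smul, Finset.smul_sum] } with hL
    have hker : LinearMap.ker L = ⊥ := by
      rw [LinearMap.ker_eq_bot']
      intro a haz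
      have := Fintype.linearIndependent_iff.mp hLI a haz
      funext t
      exact this t
    have hemb := LinearMap.isClosedEmbedding_of_injective (f := L) hker
    have hclosed : IsClosed {a : ↥S → ℝ | ∀ t, 0 ≤ a t} := by
      have : {a : ↥S → ℝ | ∀ t, 0 ≤ a t} = ⋂ t, {a | 0 ≤ a t} := by
        ext a; simp [Set.mem_iInter]
      rw [this]
      exact isClosed_iInter fun t => isClosed_le continuous_const (continuous_apply t)
    exact hemb.isClosedMap _ hclosed
  · exact isClosed_empty

open scoped InnerProductSpace in
lemma farkas_cone {ι : Type*} [Fintype ι] [DecidableEq ι] {n : ℕ}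
    (v : ι → EuclideanSpace ℝ (Fin n)) (c : EuclideanSpace ℝ (Fin n))
    (h : ∀ x : EuclideanSpace ℝ (Fin n), (∀ t, 0 ≤ ⟪v t, x⟫_ℝ) → 0 ≤ ⟪c, x⟫_ℝ) :
    ∃ a : ι → ℝ, (∀ t, 0 ≤ a t) ∧ c = ∑ t, a t • v t := by
  by_contra hc
  push_neg at hc
  set K : ConvexCone ℝ (EuclideanSpace ℝ (Fin n)) :=
    { carrier := {x | ∃ a : ι → ℝ, (∀ t, 0 ≤ a t) ∧ x = ∑ t, a t • v t}
      smul_mem' := by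
        rintro r hr x ⟨a, ha, rfl⟩
        exact ⟨fun t => r * a t, fun t => mul_nonneg hr.le (ha t), by
          simp [Finset.smul_sum, mul_smul]⟩
      add_mem' := by
        rintro x ⟨a, ha, rfl⟩ z ⟨b, hb, rfl⟩
        exact ⟨a + b, fun t => add_nonneg (ha t) (hb t), by
          simp [add_smul, Finset.sum_add_distrib]⟩ } with hK
  have hcK : c ∉ K := by
    intro ⟨a, ha, hsum⟩
    exact hc a ha hsum
  have hne : (K : Set (EuclideanSpace ℝ (Fin n))).Nonempty :=
    ⟨0, ⟨fun _ => 0, fun t => le_refl _, by simp⟩⟩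
  set C : ProperCone ℝ (EuclideanSpace ℝ (Fin n)) :=
    { carrier := {x | ∃ a : ι → ℝ, (∀ t, 0 ≤ a t) ∧ x = ∑ t, a t • v t}
      zero_mem' := ⟨fun _ => 0, fun t => le_refl _, by simp⟩
      smul_mem' := by
        rintro r x ⟨a, ha, rfl⟩
        exact ⟨fun t => r * a t, fun t => mul_nonneg r.2 (ha t), by
          simp only [Finset.smul_sum, mul_smul]; rfl⟩
      add_mem' := by
        rintro x z ⟨a, ha, rfl⟩ ⟨b, hb, rfl⟩
        exact ⟨a + b, fun t => add_nonneg (ha t) (hb t), by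
          simp [add_smul, Finset.sum_add_distrib]⟩
      isClosed' := isClosed_fgCone v } with hC
  obtain ⟨y, hy1, hy2⟩ :=
    ProperCone.hyperplane_separation' (C := C) (x₀ := c) hcK
  have hvy : ∀ t, 0 ≤ ⟪v t, y⟫_ℝ := by
    intro t
    apply hy1
    exact ⟨Pi.single t 1, fun t' => by
      by_cases h' : t' = t <;> simp [Pi.single_apply, h'], by
      rw [Finset.sum_eq_single t (fun t' _ h' => by simp [Pi.single_apply, h'])
        (by simp)]
      simp⟩
  have := h y hvy
  rw [real_inner_comm] at this
  linarith [real_inner_comm c y]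

lemma payPure_eq {n m : ℕ} (A : Matrix (Fin n) (Fin m) ℝ) (x : Fin n → ℝ) (j : Fin m) :
    payPure A x j = ∑ i, x i * A i j := by
  simp [payPure, dotProduct, mulVec_single]

lemma pay_eq {n m : ℕ} (B : Matrix (Fin n) (Fin m) ℝ) (x : Fin n → ℝ) (y : Fin m → ℝ) :
    pay B x y = ∑ i, x i * (B *ᵥ y) i := rfl

lemma stdSimplex_coord_le_one {n : ℕ} {x : Fin n → ℝ} (hx : x ∈ stdSimplex ℝ (Fin n))
    (i : Fin n) : x i ≤ 1 := by
  rw [← hx.2]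
  exact Finset.single_le_sum (fun i _ => hx.1 i) (Finset.mem_univ i)

lemma pay_abs_le {n m : ℕ} (B : Matrix (Fin n) (Fin m) ℝ) {x : Fin n → ℝ} {y : Fin m → ℝ}
    (hx : x ∈ stdSimplex ℝ (Fin n)) (hy : y ∈ stdSimplex ℝ (Fin m)) :
    |pay B x y| ≤ ∑ i, ∑ j, |B i j| := by
  rw [pay_eq]
  calc |∑ i, x i * (B *ᵥ y) i| ≤ ∑ i, |x i * (B *ᵥ y) i| := Finset.abs_sum_le_sum_abs _ _
    _ ≤ ∑ i, ∑ j, |B i j| := by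
      apply Finset.sum_le_sum
      intro i _
      rw [abs_mul]
      have h1 : |(B *ᵥ y) i| ≤ ∑ j, |B i j| := by
        calc |(B *ᵥ y) i| = |∑ j, B i j * y j| := rfl
          _ ≤ ∑ j, |B i j * y j| := Finset.abs_sum_le_sum_abs _ _
          _ ≤ ∑ j, |B i j| := by
            apply Finset.sum_le_sum
            intro j _
            rw [abs_mul]
            calc |B i j| * |y j| ≤ |B i j| * 1 := by
                  apply mul_le_mul_of_nonneg_left _ (abs_nonneg _)
                  rw [abs_of_nonneg (hy.1 j)]
                  exact stdSimplex_coord_le_one hy j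
              _ = |B i j| := mul_one _
      calc |x i| * |(B *ᵥ y) i| ≤ 1 * (∑ j, |B i j|) := by
            apply mul_le_mul
            · rw [abs_of_nonneg (hx.1 i)]; exact stdSimplex_coord_le_one hx i
            · exact h1
            · exact abs_nonneg _
            · norm_num
        _ = ∑ j, |B i j| := one_mul _

/-- The maximin value `z*` is attained: `X*` is nonempty. -/
lemma Xstar_nonempty {n m : ℕ} (hn : 0 < n) (hm : 0 < m) (A : Matrix (Fin n) (Fin m) ℝ) :
    (Xstar A).Nonempty := by
  have hFm : Nonempty (Fin m) := ⟨⟨0, hm⟩⟩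
  have hune : (Finset.univ : Finset (Fin m)).Nonempty := Finset.univ_nonempty
  set g : (Fin n → ℝ) → ℝ := fun x => Finset.univ.inf' hune (payPure A x) with hg
  have hgeq : ∀ x, sInf (Set.range (payPure A x)) = g x := by
    intro x
    show _ = Finset.univ.inf' hune (payPure A x)
    rw [Finset.inf'_eq_csInf_image]
    simp
  have hgc : Continuous g := by
    rw [continuous_iff_continuousAt]
    intro x
    apply ContinuousAt.finset_inf'_apply hune
    intro j _
    have : Continuous fun x => payPure A x j := by
      simp only [payPure_eq]
      exact continuous_finset_sum _ fun i _ => (continuous_apply i).mul continuous_const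
    exact this.continuousAt
  have hsne : (stdSimplex ℝ (Fin n)).Nonempty := by
    refine ⟨Pi.single ⟨0, hn⟩ 1, fun i => ?_, ?_⟩
    · by_cases h : i = ⟨0, hn⟩ <;> simp [Pi.single_apply, h]
    · simp
  obtain ⟨x0, hx0, hmax⟩ := isCompact_stdSimplex ℝ (Fin n) |>.exists_isMaxOn hsne
    hgc.continuousOn
  refine ⟨x0, hx0, fun j => ?_⟩
  have hz : zStar A ≤ g x0 := by
    apply csSup_le (hsne.image _)
    rintro r ⟨x, hx, rfl⟩
    show sInf (Set.range (payPure A x)) ≤ g x0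
    rw [hgeq]
    exact hmax hx
  calc zStar A ≤ g x0 := hz
    _ ≤ payPure A x0 j := Finset.inf'_le _ (Finset.mem_univ j)

section Plumbing
variable {n m : ℕ} (A B : Matrix (Fin n) (Fin m) ℝ)

lemma bddBelow_payImage {y : Fin m → ℝ} (hy : y ∈ stdSimplex ℝ (Fin m)) :
    BddBelow ((fun x => pay B x y) '' Xstar A) := by
  refine ⟨-(∑ i, ∑ j, |B i j|), ?_⟩
  rintro r ⟨x, hx, rfl⟩
  have := pay_abs_le B hx.1 hy
  have := neg_abs_le (pay B x y)
  linarith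

lemma payImage_le {y : Fin m → ℝ} (hy : y ∈ stdSimplex ℝ (Fin m))
    {x : Fin n → ℝ} (hx : x ∈ Xstar A) :
    sInf ((fun x => pay B x y) '' Xstar A) ≤ pay B x y :=
  csInf_le (bddBelow_payImage A B hy) ⟨x, hx, rfl⟩

lemma val_le_pE (hn : 0 < n) (hm : 0 < m) {y : Fin m → ℝ} (hy : y ∈ stdSimplex ℝ (Fin m)) :
    sInf ((fun x => pay B x y) '' Xstar A) ≤ pE A B := by
  obtain ⟨x0, hx0⟩ := Xstar_nonempty hn hm A
  apply le_csSup
  · refine ⟨∑ i, ∑ j, |B i j|, ?_⟩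
    rintro r ⟨y', hy', rfl⟩
    calc sInf ((fun x => pay B x y') '' Xstar A) ≤ pay B x0 y' :=
          payImage_le A B hy' hx0
      _ ≤ ∑ i, ∑ j, |B i j| := (le_abs_self _).trans (pay_abs_le B hx0.1 hy')
  · exact ⟨y, hy, rfl⟩

/-- Backward core: a certificate implies `pay B x y ≥ pE` for all `x ∈ X*`. -/
lemma cert_imp_ge (hn : 0 < n) (hm : 0 < m) {y : Fin m → ℝ} {w : Fin m → ℝ}
    (hw : ∀ j, 0 ≤ w j)
    (hcert : ∀ i : Fin n, pE A B ≤ (B *ᵥ y) i + (zStar A * (∑ j, w j) - (A *ᵥ w) i))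
    {x : Fin n → ℝ} (hx : x ∈ Xstar A) : pE A B ≤ pay B x y := by
  have hx1 : ∑ i, x i = 1 := hx.1.2
  have hx0 : ∀ i, 0 ≤ x i := hx.1.1
  have key : ∑ i, x i * ((A *ᵥ w) i - zStar A * (∑ j, w j)) ≥ 0 := by
    have e1 : ∑ i, x i * (A *ᵥ w) i = ∑ j, w j * payPure A x j := by
      simp only [mulVec, dotProduct, payPure_eq, Finset.mul_sum]
      rw [Finset.sum_comm]
      apply Finset.sum_congr rfl; intro j _
      apply Finset.sum_congr rfl; intro i _; ring
    have e2 : ∑ j, w j * zStar A = zStar A * ∑ j, w j := by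
      rw [Finset.mul_sum]
      apply Finset.sum_congr rfl; intro j _; ring
    have : ∑ i, x i * ((A *ᵥ w) i - zStar A * (∑ j, w j))
        = ∑ j, w j * (payPure A x j - zStar A) := by
      simp only [mul_sub, Finset.sum_sub_distrib, e1, ← Finset.sum_mul, hx1, one_mul, e2]
    rw [this]
    apply Finset.sum_nonneg
    intro j _
    exact mul_nonneg (hw j) (by linarith [hx.2 j])
  calc pE A B = ∑ i, x i * pE A B := by rw [← Finset.sum_mul, hx1, one_mul]
    _ ≤ ∑ i, x i * ((B *ᵥ y) i + (zStar A * (∑ j, w j) - (A *ᵥ w) i)) := by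
        apply Finset.sum_le_sum
        intro i _
        exact mul_le_mul_of_nonneg_left (hcert i) (hx0 i)
    _ = pay B x y - ∑ i, x i * ((A *ᵥ w) i - zStar A * (∑ j, w j)) := by
        rw [pay_eq]
        simp only [mul_add, mul_sub, Finset.sum_add_distrib, Finset.sum_sub_distrib]
        ring
    _ ≤ pay B x y := by linarith
end Plumbing


open scoped InnerProductSpace in
/-- `BR(X*)` equals the projection polytope
`{y ∈ Δ(m) : ∃ w ≥ 0, e_iᵀBy + (z*·1ᵀ − e_iᵀA)w ≥ p_e ∀ i}`. -/
theorem BRSet_eq_projection {n m : ℕ} (hn : 0 < n) (hm : 0 < m)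
    (A B : Matrix (Fin n) (Fin m) ℝ) :
    BRSet A B =
      {y | y ∈ stdSimplex ℝ (Fin m) ∧ ∃ w : Fin m → ℝ, (∀ j, 0 ≤ w j) ∧
        ∀ i : Fin n, pE A B ≤ (B *ᵥ y) i + (zStar A * (∑ j, w j) - (A *ᵥ w) i)} := by
  ext y
  simp only [Set.mem_setOf_eq]
  constructor
  · rintro ⟨hy, hBR⟩
    refine ⟨hy, ?_⟩
    -- the optimal value of y equals pE
    have hval : sInf ((fun x => pay B x y) '' Xstar A) = pE A B := by
      apply le_antisymm (val_le_pE A B hn hm hy)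
      apply csSup_le (Set.Nonempty.image _ ⟨y, hy⟩)
      rintro r ⟨y', hy', rfl⟩
      exact hBR y' hy'
    -- apply Farkas
    set v : (Fin m ⊕ Fin n) → EuclideanSpace ℝ (Fin n) := fun t =>
      Sum.elim (fun j => WithLp.toLp 2 (fun i => A i j - zStar A : Fin n → ℝ))
        (fun i0 => WithLp.toLp 2 (Pi.single i0 1 : Fin n → ℝ)) t with hv
    set c : EuclideanSpace ℝ (Fin n) := WithLp.toLp 2 (fun i => (B *ᵥ y) i - pE A B : Fin n → ℝ) with hc
    have hinner : ∀ (u x : EuclideanSpace ℝ (Fin n)), ⟪u, x⟫_ℝ = ∑ i, u i * x i := by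
      intro u x
      rw [PiLp.inner_apply]
      apply Finset.sum_congr rfl
      intro i _
      simp [RCLike.inner_apply]
      ring
    have hhyp : ∀ x : EuclideanSpace ℝ (Fin n), (∀ t, 0 ≤ ⟪v t, x⟫_ℝ) → 0 ≤ ⟪c, x⟫_ℝ := by
      intro x hx
      rw [hinner]
      have hxnn : ∀ i, 0 ≤ x i := by
        intro i
        have := hx (Sum.inr i)
        rw [hinner] at this
        simpa [hv, Pi.single_apply, Finset.sum_ite_eq] using this
      have hxA : ∀ j, 0 ≤ ∑ i, (A i j - zStar A) * x i := by
        intro j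
        have := hx (Sum.inl j)
        rwa [hinner] at this
      set s : ℝ := ∑ i, x i with hs
      rcases eq_or_lt_of_le (Finset.sum_nonneg (fun i _ => hxnn i) : (0:ℝ) ≤ s) with hs0 | hs0
      · -- x = 0
        have hx0 : ∀ i, x i = 0 := by
          intro i
          have := (Finset.sum_eq_zero_iff_of_nonneg (fun i _ => hxnn i)).mp hs0.symm
          exact this i (Finset.mem_univ i)
        simp only [hc]
        apply Finset.sum_nonneg
        intro i _
        rw [hx0 i]
        ring_nf
        exact le_refl _
      · -- normalize
        set x' : Fin n → ℝ := fun i => s⁻¹ * x i with hx'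
        have hx'mem : x' ∈ stdSimplex ℝ (Fin n) := by
          constructor
          · intro i
            exact mul_nonneg (inv_nonneg.mpr hs0.le) (hxnn i)
          · rw [hx']
            simp only
            rw [← Finset.mul_sum, ← hs, inv_mul_cancel₀ (ne_of_gt hs0)]
        have hx'star : x' ∈ Xstar A := by
          refine ⟨hx'mem, fun j => ?_⟩
          rw [payPure_eq]
          have h1 : ∑ i, x' i * A i j = s⁻¹ * ∑ i, x i * A i j := by
            rw [Finset.mul_sum]
            apply Finset.sum_congr rfl
            intro i _
            simp only [hx']
            ring
          have h2 : zStar A * s ≤ ∑ i, x i * A i j := by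
            have h := hxA j
            have e : ∑ i, (A i j - zStar A) * x i = (∑ i, x i * A i j) - zStar A * s := by
              rw [hs, Finset.mul_sum, ← Finset.sum_sub_distrib]
              apply Finset.sum_congr rfl; intro i _; ring
            rw [e] at h
            linarith
          rw [h1]
          calc zStar A = s⁻¹ * (zStar A * s) := by
                have hs' : s ≠ 0 := ne_of_gt hs0
                field_simp
            _ ≤ s⁻¹ * ∑ i, x i * A i j :=
                mul_le_mul_of_nonneg_left h2 (inv_nonneg.mpr hs0.le)
        have hpay : pE A B ≤ pay B x' y := by
          rw [← hval]
          exact payImage_le A B hy hx'star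
        have hpay2 : pay B x' y = s⁻¹ * ∑ i, x i * (B *ᵥ y) i := by
          rw [pay_eq, Finset.mul_sum]
          apply Finset.sum_congr rfl
          intro i _
          simp only [hx']
          ring
        have h4 : pE A B * s ≤ ∑ i, x i * (B *ᵥ y) i := by
          rw [hpay2] at hpay
          have h6 : s * (s⁻¹ * ∑ i, x i * (B *ᵥ y) i) = ∑ i, x i * (B *ᵥ y) i := by
            rw [← mul_assoc, mul_inv_cancel₀ (ne_of_gt hs0), one_mul]
          have h7 := mul_le_mul_of_nonneg_left hpay hs0.le
          rw [h6] at h7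
          linarith
        simp only [hc]
        have h5 : ∑ i, ((B *ᵥ y) i - pE A B) * x i
            = (∑ i, x i * (B *ᵥ y) i) - pE A B * s := by
          rw [hs, Finset.mul_sum, ← Finset.sum_sub_distrib]
          apply Finset.sum_congr rfl; intro i _; ring
        rw [h5]
        linarith
    obtain ⟨a, ha0, hasum⟩ := farkas_cone v c hhyp
    refine ⟨fun j => a (Sum.inl j), fun j => ha0 _, fun i => ?_⟩
    have := congrArg (fun z => z i) hasum
    have hsum_apply : (∑ t, a t • v t) i = ∑ t, a t * v t i := by
      rw [WithLp.ofLp_sum, Finset.sum_apply]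
      apply Finset.sum_congr rfl
      intro t _
      rfl
    rw [hsum_apply, Fintype.sum_sum_type] at this
    have hc_i : c i = (B *ᵥ y) i - pE A B := rfl
    rw [hc_i] at this
    have hinl : ∑ j, a (Sum.inl j) * v (Sum.inl j) i
        = (A *ᵥ (fun j => a (Sum.inl j))) i - zStar A * ∑ j, a (Sum.inl j) := by
      simp only [hv, Sum.elim_inl, PiLp.toLp_apply, mulVec, dotProduct, Finset.mul_sum, Finset.sum_sub_distrib]
      rw [← Finset.sum_sub_distrib]
      apply Finset.sum_congr rfl
      intro j _
      ring
    have hinr : 0 ≤ ∑ i0, a (Sum.inr i0) * v (Sum.inr i0) i := by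
      apply Finset.sum_nonneg
      intro i0 _
      apply mul_nonneg (ha0 _)
      simp only [hv, Sum.elim_inr]
      by_cases h : i = i0 <;> simp [Pi.single_apply, h]
    rw [hinl] at this
    linarith
  · rintro ⟨hy, w, hw, hcert⟩
    refine ⟨hy, fun y' hy' => ?_⟩
    calc sInf ((fun x => pay B x y') '' Xstar A) ≤ pE A B := val_le_pE A B hn hm hy'
      _ ≤ sInf ((fun x => pay B x y) '' Xstar A) := by
          apply le_csInf ((Xstar_nonempty hn hm A).image _)
          rintro r ⟨x, hx, rfl⟩
          exact cert_imp_ge A B hn hm hw hcert hx
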